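/- arXiv:1603.01437 — 4 statements merged into one kernel-verified Lean document; each statement's English description precedes it below -/
import Mathlib

section
/- For any Hermitian operators Z and ρ_j with Z ≥ ρ_j for all j ∈ {1,…,n} (in the Loewner order), and a POVM {M_j} (positive operators summing to I) with ZM_j = ρ_j M_j for all j, the quantity ∑_j Tr(ρ_j N_j) over any other POVM {N_j} is at most Tr Z. -/
open scoped ComplexOrder

lemma psd_trace_nonneg {d : Type*} [Fintype d] [DecidableEq d]
    {A : Matrix d d ℂ} (hA : A.PosSemidef) : 0 ≤ A.trace := by
  rw [Matrix.trace]
  apply Finset.sum_nonneg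
  intro i _
  have := hA.dotProduct_mulVec_nonneg (Pi.single i 1)
  simpa [dotProduct, Matrix.mulVec, Pi.single_apply, Matrix.diag] using this

lemma psd_trace_mul_nonneg {d : Type*} [Fintype d] [DecidableEq d]
    {A B : Matrix d d ℂ} (hA : A.PosSemidef) (hB : B.PosSemidef) :
    0 ≤ (A * B).trace := by
  open scoped MatrixOrder in obtain ⟨C, rfl⟩ := CStarAlgebra.nonneg_iff_eq_star_mul_self.mp hA.nonneg
  rw [Matrix.mul_assoc, Matrix.trace_mul_comm]
  exact psd_trace_nonneg (hB.mul_mul_conjTranspose_same C)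

theorem optimal_povm_success_le_trace
    {d : Type*} [Fintype d] [DecidableEq d] {n : ℕ}
    (Z : Matrix d d ℂ) (ρ : Fin n → Matrix d d ℂ)
    (hZ : Z.IsHermitian) (hρ : ∀ j, (ρ j).IsHermitian)
    (hmaj : ∀ j, (Z - ρ j).PosSemidef)
    (M : Fin n → Matrix d d ℂ)
    (hM : ∀ j, (M j).PosSemidef) (hMsum : ∑ j, M j = 1)
    (hZM : ∀ j, Z * M j = ρ j * M j)
    (N : Fin n → Matrix d d ℂ)
    (hN : ∀ j, (N j).PosSemidef) (hNsum : ∑ j, N j = 1) :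
    ∑ j, (ρ j * N j).trace ≤ Z.trace := by
  have key : Z.trace = ∑ j, (Z * N j).trace := by
    rw [← Matrix.trace_sum]
    congr 1
    rw [← Finset.mul_sum, hNsum, mul_one]
  rw [key]
  apply Finset.sum_le_sum
  intro j _
  have h := psd_trace_mul_nonneg (hmaj j) (hN j)
  rw [Matrix.sub_mul, Matrix.trace_sub] at h
  exact sub_nonneg.mp h
end

section
/- Let ρ_1,…,ρ_n be positive semidefinite operators and {M_j} a POVM. If there exists a positive semidefinite Z with Z ≥ ρ_j for all j and ∑_j Tr((Z − ρ_j)M_j) = 0, then (Z − ρ_j)M_j = 0 for every j. -/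
open scoped ComplexOrder Matrix

open scoped MatrixOrder in
noncomputable def Matrix.PosSemidef.sqrt {d : Type*} [Fintype d] [DecidableEq d]
    {A : Matrix d d ℂ} (_ : A.PosSemidef) : Matrix d d ℂ := CFC.sqrt A

open scoped MatrixOrder in
lemma Matrix.PosSemidef.posSemidef_sqrt {d : Type*} [Fintype d] [DecidableEq d]
    {A : Matrix d d ℂ} (hA : A.PosSemidef) : hA.sqrt.PosSemidef :=
  Matrix.nonneg_iff_posSemidef.mp (CFC.sqrt_nonneg A)

open scoped MatrixOrder in
lemma Matrix.PosSemidef.sqrt_mul_self {d : Type*} [Fintype d] [DecidableEq d]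
    {A : Matrix d d ℂ} (hA : A.PosSemidef) : hA.sqrt * hA.sqrt = A :=
  CFC.sqrt_mul_sqrt_self A hA.nonneg

lemma trace_psd_mul_eq (A B : Matrix d₀ d₀ ℂ) [Fintype d₀] [DecidableEq d₀]
    (hA : A.PosSemidef) (hB : B.PosSemidef) :
    (A * B).trace = ((hA.sqrt * hB.sqrt)ᴴ * (hA.sqrt * hB.sqrt)).trace := by
  have hAs := hA.posSemidef_sqrt.isHermitian
  have hBs := hB.posSemidef_sqrt.isHermitian
  rw [Matrix.conjTranspose_mul, hAs.eq, hBs.eq]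
  have h1 : hB.sqrt * hA.sqrt * (hA.sqrt * hB.sqrt) = hB.sqrt * A * hB.sqrt := by
    rw [Matrix.mul_assoc, ← Matrix.mul_assoc hA.sqrt, hA.sqrt_mul_self, ← Matrix.mul_assoc]
  rw [h1, ← Matrix.trace_mul_cycle, Matrix.mul_assoc, hB.sqrt_mul_self]

lemma trace_conjTranspose_mul_self_nonneg' (X : Matrix d₀ d₀ ℂ) [Fintype d₀] :
    0 ≤ (Xᴴ * X).trace := by
  rw [Matrix.trace]
  refine Finset.sum_nonneg fun j _ => ?_
  rw [Matrix.diag_apply, Matrix.mul_apply]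
  exact Finset.sum_nonneg fun k _ => by
    simpa [Matrix.conjTranspose_apply] using star_mul_self_nonneg (X k j)

lemma eq_zero_of_trace_conjTranspose_mul_self (X : Matrix d₀ d₀ ℂ) [Fintype d₀]
    (h : (Xᴴ * X).trace = 0) : X = 0 := by
  rw [Matrix.trace] at h
  have h0 : ∀ j ∈ Finset.univ, (0:ℂ) ≤ (Xᴴ * X).diag j := fun j _ => by
    rw [Matrix.diag_apply, Matrix.mul_apply]
    exact Finset.sum_nonneg fun k _ => by
      simpa [Matrix.conjTranspose_apply] using star_mul_self_nonneg (X k j)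
  have hdiag := (Finset.sum_eq_zero_iff_of_nonneg h0).mp h
  ext i j
  have := hdiag j (Finset.mem_univ j)
  rw [Matrix.diag_apply, Matrix.mul_apply] at this
  have h0' : ∀ k ∈ Finset.univ, (0:ℂ) ≤ Xᴴ j k * X k j := fun k _ => by
    simpa [Matrix.conjTranspose_apply] using star_mul_self_nonneg (X k j)
  have := (Finset.sum_eq_zero_iff_of_nonneg h0').mp this i (Finset.mem_univ i)
  rw [Matrix.conjTranspose_apply, Complex.star_def,
    ← Complex.normSq_eq_conj_mul_self] at this
  have h2 : Complex.normSq (X i j) = 0 := by exact_mod_cast this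
  simpa using Complex.normSq_eq_zero.mp h2

theorem mul_eq_zero_of_sum_trace_eq_zero
    {d : Type*} [Fintype d] [DecidableEq d] {n : ℕ}
    (ρ : Fin n → Matrix d d ℂ) (hρ : ∀ j, (ρ j).PosSemidef)
    (M : Fin n → Matrix d d ℂ)
    (hM : ∀ j, (M j).PosSemidef) (hMsum : ∑ j, M j = 1)
    (Z : Matrix d d ℂ) (hZ : Z.PosSemidef)
    (hmaj : ∀ j, (Z - ρ j).PosSemidef)
    (hsum : ∑ j, ((Z - ρ j) * M j).trace = 0) :
    ∀ j, (Z - ρ j) * M j = 0 := by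
  have hnn : ∀ j ∈ Finset.univ, (0:ℂ) ≤ ((Z - ρ j) * M j).trace := fun j _ => by
    rw [trace_psd_mul_eq _ _ (hmaj j) (hM j)]
    exact trace_conjTranspose_mul_self_nonneg' _
  have hzero := (Finset.sum_eq_zero_iff_of_nonneg hnn).mp hsum
  intro j
  have htr := hzero j (Finset.mem_univ j)
  rw [trace_psd_mul_eq _ _ (hmaj j) (hM j)] at htr
  have hX := eq_zero_of_trace_conjTranspose_mul_self _ htr
  calc (Z - ρ j) * M j
      = ((hmaj j).sqrt * (hmaj j).sqrt) * ((hM j).sqrt * (hM j).sqrt) := by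
        rw [(hmaj j).sqrt_mul_self, (hM j).sqrt_mul_self]
    _ = (hmaj j).sqrt * (((hmaj j).sqrt * (hM j).sqrt) * (hM j).sqrt) := by
        simp only [Matrix.mul_assoc]
    _ = 0 := by rw [hX]; simp
end

section
/- For a completely positive map ξ with Choi matrix Z, sup over density matrices ψ on H of Tr(ξ(ψ)) equals ‖Tr_K Z‖, the operator norm of the partial trace of Z over K. -/
open scoped ComplexOrder

variable {H K : Type*} [Fintype H] [DecidableEq H] [Fintype K] [DecidableEq K]

/-- Partial trace over the first factor `K` of `K × H`. -/
noncomputable def ptK (M : Matrix (K × H) (K × H) ℂ) : Matrix H H ℂ :=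
  Matrix.of fun i j => ∑ k : K, M (k, i) (k, j)

/-- The Choi matrix of a linear map on matrices:
`C(ξ) = (ξ ⊗ id)(|ψ_H⟩⟨ψ_H|)` with `|ψ_H⟩ = ∑ i, |i⟩⊗|i⟩`. -/
noncomputable def choi (ξ : Matrix H H ℂ →ₗ[ℂ] Matrix K K ℂ) :
    Matrix (K × H) (K × H) ℂ :=
  Matrix.of fun p q => ξ (Matrix.single p.2 q.2 1) p.1 q.1

/-- The map `ξ ⊗ id` acting on `B(H ⊗ H)`. -/
noncomputable def tensorId (ξ : Matrix H H ℂ →ₗ[ℂ] Matrix K K ℂ)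
    (M : Matrix (H × H) (H × H) ℂ) : Matrix (K × H) (K × H) ℂ :=
  Matrix.of fun p q => ξ (Matrix.of fun i j => M (i, p.2) (j, q.2)) p.1 q.1

/-- The trace norm `‖A‖₁ = Tr √(AᴴA)`. -/
noncomputable def traceNorm {d : Type*} [Fintype d] [DecidableEq d]
    (A : Matrix d d ℂ) : ℝ :=
  (((Matrix.posSemidef_conjTranspose_mul_self A).isHermitian.eigenvectorUnitary.1 *
    Matrix.diagonal (((↑) : ℝ → ℂ) ∘ (√·) ∘ (Matrix.posSemidef_conjTranspose_mul_self A).isHermitian.eigenvalues) *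
    (star (Matrix.posSemidef_conjTranspose_mul_self A).isHermitian.eigenvectorUnitary : Matrix d d ℂ)).trace).re

/-- The operator (spectral) norm of a matrix. -/
noncomputable def opNorm {d : Type*} [Fintype d] [DecidableEq d]
    (A : Matrix d d ℂ) : ℝ :=
  ‖LinearMap.toContinuousLinearMap (Matrix.toEuclideanLin A)‖

/-- The diamond norm: `sup` over states `τ` on `H ⊗ H` of `‖(ξ ⊗ id)(τ)‖₁`. -/
noncomputable def diamondNorm (ξ : Matrix H H ℂ →ₗ[ℂ] Matrix K K ℂ) : ℝ :=
  ⨆ τ : {τ : Matrix (H × H) (H × H) ℂ // τ.PosSemidef ∧ τ.trace = 1},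
    traceNorm (tensorId ξ τ.1)

open Matrix in
private lemma quad_le_opNorm_aux {d : Type*} [Fintype d] [DecidableEq d]
    (A : Matrix d d ℂ) (x : d → ℂ) :
    (star x ⬝ᵥ A *ᵥ x).re ≤ opNorm A * ∑ i, ‖x i‖ ^ 2 := by
  classical
  set T := LinearMap.toContinuousLinearMap (Matrix.toEuclideanLin A)
  set x' : EuclideanSpace ℂ d := (WithLp.equiv 2 (d → ℂ)).symm x
  have hinner : (inner ℂ x' (T x') : ℂ) = star x ⬝ᵥ A *ᵥ x := by
    simp only [T, LinearMap.coe_toContinuousLinearMap', Matrix.toEuclideanLin_apply]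
    simp [PiLp.inner_apply, dotProduct, x', RCLike.inner_apply, mul_comm]
  have hx' : ‖x'‖ ^ 2 = ∑ i, ‖x i‖ ^ 2 := by
    rw [EuclideanSpace.norm_eq, Real.sq_sqrt (by positivity)]
    rfl
  calc (star x ⬝ᵥ A *ᵥ x).re = (inner ℂ x' (T x') : ℂ).re := by rw [hinner]
    _ ≤ ‖(inner ℂ x' (T x') : ℂ)‖ := Complex.re_le_norm _
    _ ≤ ‖x'‖ * ‖T x'‖ := norm_inner_le_norm _ _
    _ ≤ ‖x'‖ * (‖T‖ * ‖x'‖) := by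
        have := T.le_opNorm x'
        nlinarith [norm_nonneg x', norm_nonneg (T x')]
    _ = ‖T‖ * ‖x'‖ ^ 2 := by ring
    _ = opNorm A * ∑ i, ‖x i‖ ^ 2 := by rw [hx']; rfl

open Matrix MatrixOrder in
private lemma re_trace_mul_le_aux {d : Type*} [Fintype d] [DecidableEq d]
    {A B : Matrix d d ℂ} (hA : A.PosSemidef) (hB : B.PosSemidef) :
    ((A * B).trace).re ≤ opNorm A * (B.trace).re := by
  classical
  set s := CFC.sqrt B with hs_def
  have hs : s * s = B := CFC.sqrt_mul_sqrt_self B hB.nonneg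
  have hherm : s.IsHermitian := (Matrix.nonneg_iff_posSemidef.mp (CFC.sqrt_nonneg B)).1
  have hconj : ∀ k i, (starRingEnd ℂ) (s k i) = s i k := fun k i => by
    have := congrFun (congrFun hherm.eq i) k
    simpa [Matrix.conjTranspose_apply, Complex.star_def] using this
  have habs : ∀ z : ℂ, (z * (starRingEnd ℂ) z).re = ‖z‖ ^ 2 := by
    intro z
    rw [Complex.mul_conj, ← Complex.sq_norm]
    exact Complex.ofReal_re _
  have hkey : (A * B).trace = ∑ i, star (fun j => s j i) ⬝ᵥ A *ᵥ (fun j => s j i) := by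
    rw [← hs, ← mul_assoc, Matrix.trace_mul_cycle, Matrix.trace]
    refine Finset.sum_congr rfl fun i _ => ?_
    simp only [Matrix.diag_apply, Matrix.mul_apply, dotProduct, Matrix.mulVec,
      Pi.star_apply, Complex.star_def, hconj, Finset.sum_mul, Finset.mul_sum]
    rw [Finset.sum_comm]
    refine Finset.sum_congr rfl fun k _ => Finset.sum_congr rfl fun j _ => by ring
  have htrB : (B.trace).re = ∑ i, ∑ k, ‖s i k‖ ^ 2 := by
    rw [← hs, Matrix.trace, Complex.re_sum]
    refine Finset.sum_congr rfl fun i _ => ?_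
    rw [Matrix.diag_apply, Matrix.mul_apply, Complex.re_sum]
    exact Finset.sum_congr rfl fun k _ => by rw [← hconj i k, habs]
  rw [hkey, Complex.re_sum, htrB]
  calc ∑ i, (star (fun j => s j i) ⬝ᵥ A *ᵥ (fun j => s j i)).re
      ≤ ∑ i, opNorm A * ∑ k, ‖s k i‖ ^ 2 :=
        Finset.sum_le_sum fun i _ => quad_le_opNorm_aux A _
    _ = opNorm A * ∑ i, ∑ k, ‖s k i‖ ^ 2 := by rw [Finset.mul_sum]
    _ = opNorm A * ∑ i, ∑ k, ‖s i k‖ ^ 2 := by rw [Finset.sum_comm]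

open Matrix in
private lemma exists_unit_quad_eq_opNorm_aux {d : Type*} [Fintype d] [DecidableEq d]
    [Nonempty d] {A : Matrix d d ℂ} (hA : A.PosSemidef) :
    ∃ x : d → ℂ, (∑ i, ‖x i‖ ^ 2) = 1 ∧ (star x ⬝ᵥ A *ᵥ x).re = opNorm A := by
  classical
  have hH := hA.1
  set μ := hH.eigenvalues with hμ
  set b := hH.eigenvectorBasis with hb
  obtain ⟨i0, hi0⟩ := Finite.exists_max μ
  have hμ0 : 0 ≤ μ i0 := hA.eigenvalues_nonneg i0
  set x : d → ℂ := ⇑(b i0) with hx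
  have hxnorm : (∑ i, ‖x i‖ ^ 2) = 1 := by
    have h1 : ‖b i0‖ = 1 := b.orthonormal.1 i0
    have h2 : ‖b i0‖ = Real.sqrt (∑ i, ‖x i‖ ^ 2) := EuclideanSpace.norm_eq _
    have h3 : Real.sqrt (∑ i, ‖x i‖ ^ 2) = 1 := by rw [← h2, h1]
    have h4 : (0:ℝ) ≤ ∑ i, ‖x i‖ ^ 2 := by positivity
    nlinarith [Real.sq_sqrt h4]
  have hdot : star x ⬝ᵥ x = ((∑ i, ‖x i‖ ^ 2 : ℝ) : ℂ) := by
    push_cast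
    simp only [dotProduct, Pi.star_apply, Complex.star_def]
    refine Finset.sum_congr rfl fun i _ => ?_
    rw [mul_comm, Complex.mul_conj, ← Complex.sq_norm]
    push_cast
    ring
  have hquad : star x ⬝ᵥ A *ᵥ x = ((μ i0 : ℝ) : ℂ) := by
    rw [hH.mulVec_eigenvectorBasis i0]
    rw [dotProduct_smul]
    rw [hdot, hxnorm]
    simp [hμ]
  refine ⟨x, hxnorm, ?_⟩
  rw [hquad]
  simp only [Complex.ofReal_re]
  have hle : μ i0 ≤ opNorm A := by
    have := quad_le_opNorm_aux A x
    rw [hquad, hxnorm] at this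
    simpa using this
  have hge : opNorm A ≤ μ i0 := by
    apply ContinuousLinearMap.opNorm_le_bound _ hμ0
    intro y
    set c := b.repr y with hc
    have hTb : ∀ i, Matrix.toEuclideanLin A (b i) = ((μ i : ℝ) : ℂ) • b i := by
      intro i
      have h1 := hH.mulVec_eigenvectorBasis i
      apply (WithLp.equiv 2 (d → ℂ)).injective
      funext j
      have := congrFun h1 j
      simpa [Matrix.toEuclideanLin_apply] using this
    set w : EuclideanSpace ℂ d := WithLp.toLp 2 (fun i => ((μ i : ℝ) : ℂ) * c i) with hw
    have hTy : LinearMap.toContinuousLinearMap (Matrix.toEuclideanLin A) y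
        = b.repr.symm w := by
      rw [hw, ← b.sum_repr_symm]
      conv_lhs => rw [← b.sum_repr y]
      simp only [LinearMap.coe_toContinuousLinearMap', map_sum, _root_.map_smul]
      refine Finset.sum_congr rfl fun i _ => ?_
      rw [hTb i, smul_smul, mul_comm]
    rw [hTy]
    have h5 : ‖b.repr.symm w‖ = ‖w‖ := LinearIsometryEquiv.norm_map _ _
    have h6 : ‖y‖ = ‖c‖ := (LinearIsometryEquiv.norm_map b.repr y).symm
    rw [h5, h6, EuclideanSpace.norm_eq w, EuclideanSpace.norm_eq c]
    rw [← Real.sqrt_sq hμ0, ← Real.sqrt_mul (by positivity)]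
    apply Real.sqrt_le_sqrt
    rw [Finset.mul_sum]
    apply Finset.sum_le_sum
    intro i _
    have hwi : ‖w i‖ = |μ i| * ‖c i‖ := by
      rw [hw]
      rw [norm_mul, Complex.norm_real, Real.norm_eq_abs]
    rw [hwi, mul_pow, sq_abs]
    have h7 : μ i ^ 2 ≤ μ i0 ^ 2 := by
      have := hA.eigenvalues_nonneg i
      nlinarith [hi0 i]
    exact mul_le_mul_of_nonneg_right h7 (sq_nonneg _)
  linarith

private lemma conj_mul_self_sum_aux {d : Type*} [Fintype d] (x : d → ℂ) :
    ∑ i, (starRingEnd ℂ) (x i) * x i = ((∑ i, ‖x i‖ ^ 2 : ℝ) : ℂ) := by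
  push_cast
  refine Finset.sum_congr rfl fun i _ => ?_
  rw [mul_comm, Complex.mul_conj, ← Complex.sq_norm]
  push_cast
  ring

open Matrix in
private lemma ptK_posSemidef_aux {Z : Matrix (K × H) (K × H) ℂ} (hZ : Z.PosSemidef) :
    (ptK Z).PosSemidef := by
  classical
  refine Matrix.PosSemidef.of_dotProduct_mulVec_nonneg ?_ ?_
  · ext i j
    simp only [Matrix.conjTranspose_apply, ptK, Matrix.of_apply, star_sum]
    refine Finset.sum_congr rfl fun k _ => ?_
    have := congrFun (congrFun hZ.1.eq (k, i)) (k, j)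
    simpa [Matrix.conjTranspose_apply, Complex.star_def] using this
  · intro x
    set y : K → (K × H) → ℂ := fun k p => if p.1 = k then x p.2 else 0 with hy
    have hsum : star x ⬝ᵥ (ptK Z) *ᵥ x = ∑ k, star (y k) ⬝ᵥ Z *ᵥ (y k) := by
      simp only [dotProduct, Matrix.mulVec, ptK, Matrix.of_apply, Pi.star_apply, hy,
        Fintype.sum_prod_type, apply_ite (star : ℂ → ℂ), star_zero, ite_mul, zero_mul,
        mul_ite, mul_zero, Finset.sum_ite_irrel, Finset.sum_const_zero,
        Finset.sum_ite_eq', Finset.mem_univ, if_true, Finset.sum_mul, Finset.mul_sum]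
      calc ∑ i : H, ∑ j : H, ∑ k : K, star (x i) * (Z (k, i) (k, j) * x j)
          = ∑ i : H, ∑ k : K, ∑ j : H, star (x i) * (Z (k, i) (k, j) * x j) :=
            Finset.sum_congr rfl fun i _ => Finset.sum_comm
        _ = ∑ k : K, ∑ i : H, ∑ j : H, star (x i) * (Z (k, i) (k, j) * x j) :=
            Finset.sum_comm
    rw [hsum]
    exact Finset.sum_nonneg fun k _ => hZ.dotProduct_mulVec_nonneg (y k)

private lemma trace_apply_eq_aux (ξ : Matrix H H ℂ →ₗ[ℂ] Matrix K K ℂ) (ψ : Matrix H H ℂ) :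
    (ξ ψ).trace = ∑ i, ∑ j, ψ i j * (ptK (choi ξ)) i j := by
  classical
  conv_lhs => rw [Matrix.matrix_eq_sum_single ψ]
  rw [map_sum, Matrix.trace_sum]
  refine Finset.sum_congr rfl fun i _ => ?_
  rw [map_sum, Matrix.trace_sum]
  refine Finset.sum_congr rfl fun j _ => ?_
  have h1 : Matrix.single i j (ψ i j) = ψ i j • Matrix.single i j (1 : ℂ) := by
    rw [Matrix.smul_single, smul_eq_mul, mul_one]
  rw [h1, LinearMap.map_smul, Matrix.trace_smul, smul_eq_mul]
  congr 1

open Matrix in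
private lemma density_exists_aux [Nonempty H] (x : H → ℂ) (hx : ∑ i, ‖x i‖ ^ 2 = 1) :
    ∃ ψ : Matrix H H ℂ, ψ.PosSemidef ∧ ψ.trace = 1 ∧
      ∀ A : Matrix H H ℂ, (∑ i, ∑ j, ψ i j * A i j) = star x ⬝ᵥ A *ᵥ x := by
  classical
  obtain ⟨j0⟩ := ‹Nonempty H›
  set M : Matrix H H ℂ := Matrix.of fun l k => if l = j0 then x k else 0 with hM
  have hentry : ∀ i j, (Mᴴ * M) i j = (starRingEnd ℂ) (x i) * x j := by
    intro i j
    simp [Matrix.mul_apply, Matrix.conjTranspose_apply, hM, apply_ite (star : ℂ → ℂ),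
      ite_mul, zero_mul, Finset.sum_ite_eq', Complex.star_def]
  refine ⟨Mᴴ * M, Matrix.posSemidef_conjTranspose_mul_self M, ?_, ?_⟩
  · rw [Matrix.trace]
    simp only [Matrix.diag_apply, hentry]
    rw [conj_mul_self_sum_aux, hx]
    exact Complex.ofReal_one
  · intro A
    simp only [hentry, dotProduct, Matrix.mulVec, Pi.star_apply, Complex.star_def]
    refine Finset.sum_congr rfl fun i _ => ?_
    rw [Finset.mul_sum]
    refine Finset.sum_congr rfl fun j _ => by ring

theorem iSup_trace_eq_opNorm_ptK_choi [Nonempty H]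
    (ξ : Matrix H H ℂ →ₗ[ℂ] Matrix K K ℂ)
    (hCP : (choi ξ).PosSemidef) :
    (⨆ ψ : {ψ : Matrix H H ℂ // ψ.PosSemidef ∧ ψ.trace = 1},
        ((ξ ψ.1).trace).re) = opNorm (ptK (choi ξ)) := by
  classical
  set A := ptK (choi ξ) with hA
  have hApsd : A.PosSemidef := ptK_posSemidef_aux hCP
  have hub : ∀ ψ : {ψ : Matrix H H ℂ // ψ.PosSemidef ∧ ψ.trace = 1},
      ((ξ ψ.1).trace).re ≤ opNorm A := by
    rintro ⟨ψ, hpsd, htr⟩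
    rw [trace_apply_eq_aux]
    have h2 : ∑ i, ∑ j, ψ i j * A i j = (A * ψ.transpose).trace := by
      rw [Matrix.trace]
      refine Finset.sum_congr rfl fun i _ => ?_
      rw [Matrix.diag_apply, Matrix.mul_apply]
      exact Finset.sum_congr rfl fun j _ => by
        rw [Matrix.transpose_apply]; ring
    rw [← hA, h2]
    have h3 := re_trace_mul_le_aux hApsd hpsd.transpose
    rw [Matrix.trace_transpose, htr] at h3
    simpa using h3
  obtain ⟨x, hx1, hx2⟩ := exists_unit_quad_eq_opNorm_aux hApsd
  obtain ⟨ψs, hpsd, htr, hval⟩ := density_exists_aux x hx1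
  have hxval : ((ξ ψs).trace).re = opNorm A := by
    rw [trace_apply_eq_aux, ← hA, hval A]
    exact hx2
  haveI : Nonempty {ψ : Matrix H H ℂ // ψ.PosSemidef ∧ ψ.trace = 1} := ⟨⟨ψs, hpsd, htr⟩⟩
  apply le_antisymm
  · exact ciSup_le hub
  · have hbdd : BddAbove (Set.range fun ψ : {ψ : Matrix H H ℂ // ψ.PosSemidef ∧ ψ.trace = 1} =>
        ((ξ ψ.1).trace).re) := ⟨opNorm A, by rintro r ⟨ψ, rfl⟩; exact hub ψ⟩
    calc opNorm A = ((ξ ψs).trace).re := hxval.symm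
      _ ≤ _ := le_ciSup hbdd ⟨ψs, hpsd, htr⟩
end

section
/- Let {|ξ_i⟩}, {|η_i⟩} be orthonormal bases of H with c_i := (1 − |⟨ξ_i, η_i⟩|²)^{1/2} > 0 for all i and d := (2/dim H)·∑_i c_i. Then d − c_j > 0 for every j whenever the condition ∑_i c_i P_{ξ_i,η_i} = dI holds, where P_{ξ_i,η_i} is the projection onto span{ξ_i, η_i}. -/
open scoped ComplexOrder

/-- The rank-one projection `|ψ⟩⟨ψ|` as a matrix. -/
noncomputable def projMat {ι : Type*} [Fintype ι] (ψ : ι → ℂ) : Matrix ι ι ℂ :=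
  Matrix.vecMulVec ψ (star ψ)

open Matrix in
theorem d_sub_c_pos
    {ι : Type*} [Fintype ι] [DecidableEq ι] [Nonempty ι]
    (ξ η : ι → ι → ℂ)
    (hξ : ∀ i j, (∑ k, (starRingEnd ℂ) (ξ i k) * ξ j k) = if i = j then 1 else 0)
    (hη : ∀ i j, (∑ k, (starRingEnd ℂ) (η i k) * η j k) = if i = j then 1 else 0)
    (c : ι → ℝ)
    (hc : ∀ i, c i = Real.sqrt (1 - ‖∑ k, (starRingEnd ℂ) (ξ i k) * η i k‖ ^ 2))
    (hcpos : ∀ i, 0 < c i)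
    (d : ℝ) (hd : d = (2 / (Fintype.card ι : ℝ)) * ∑ i, c i)
    (P : ι → Matrix ι ι ℂ)
    (hP : ∀ i, (P i).IsHermitian ∧ P i * P i = P i ∧
      LinearMap.range (P i).mulVecLin = Submodule.span ℂ {ξ i, η i})
    (hcond : (∑ i, (c i : ℂ) • P i) = (d : ℂ) • (1 : Matrix ι ι ℂ)) :
    ∀ j, c j < d := by
  classical
  intro j
  -- P i fixes vectors in its range
  have hfix : ∀ i (w : ι → ℂ), w ∈ Submodule.span ℂ {ξ i, η i} → P i *ᵥ w = w := by
    intro i w hw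
    rw [← (hP i).2.2] at hw
    obtain ⟨u, hu⟩ := hw
    rw [Matrix.mulVecLin_apply] at hu
    rw [← hu, Matrix.mulVec_mulVec, (hP i).2.1]
  have hfixξ : ∀ i, P i *ᵥ ξ i = ξ i := fun i =>
    hfix i (ξ i) (Submodule.subset_span (Set.mem_insert _ _))
  have hfixη : ∀ i, P i *ᵥ η i = η i := fun i =>
    hfix i (η i) (Submodule.subset_span (Set.mem_insert_of_mem _ rfl))
  set r : ι → ℝ := fun i => ∑ k, Complex.normSq ((P i *ᵥ ξ j) k) with hr
  have hrnn : ∀ i, 0 ≤ r i := fun i =>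
    Finset.sum_nonneg fun k _ => Complex.normSq_nonneg _
  -- ⟨ξ j, P i ξ j⟩ = r i
  have hterm : ∀ i, star (ξ j) ⬝ᵥ (P i *ᵥ ξ j) = (r i : ℂ) := by
    intro i
    have hs : star (P i *ᵥ ξ j) = star (ξ j) ᵥ* P i := by
      rw [Matrix.star_mulVec, (hP i).1.eq]
    have h1 : star (ξ j) ⬝ᵥ (P i *ᵥ ξ j) = star (P i *ᵥ ξ j) ⬝ᵥ (P i *ᵥ ξ j) := by
      rw [hs, ← Matrix.dotProduct_mulVec, Matrix.mulVec_mulVec, (hP i).2.1]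
    rw [h1, dotProduct, hr]
    push_cast
    refine Finset.sum_congr rfl fun k _ => ?_
    rw [Pi.star_apply, Complex.star_def, Complex.normSq_eq_conj_mul_self]
  -- ⟨ξ j, ξ j⟩ = 1
  have hξj1 : star (ξ j) ⬝ᵥ ξ j = 1 := by
    have := hξ j j
    simpa [dotProduct] using this
  -- main identity: d = ∑ i, c i * r i
  have key : (d : ℂ) = ∑ i, ((c i * r i : ℝ) : ℂ) := by
    have hmain : (∑ i, star (ξ j) ⬝ᵥ (((c i : ℂ) • P i) *ᵥ ξ j))
        = star (ξ j) ⬝ᵥ (((d : ℂ) • (1 : Matrix ι ι ℂ)) *ᵥ ξ j) := by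
      rw [← hcond]
      exact (map_sum (AddMonoidHom.mk' (fun M : Matrix ι ι ℂ => star (ξ j) ⬝ᵥ (M *ᵥ ξ j))
        (fun M N => by simp only [Matrix.add_mulVec, dotProduct_add])) _ _).symm
    rw [Matrix.smul_mulVec, Matrix.one_mulVec, dotProduct_smul, hξj1,
      smul_eq_mul, mul_one] at hmain
    rw [← hmain]
    refine Finset.sum_congr rfl fun i _ => ?_
    rw [Matrix.smul_mulVec, dotProduct_smul, smul_eq_mul, hterm i]
    push_cast
    ring
  have keyR : d = ∑ i, c i * r i := by exact_mod_cast key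
  -- r j = 1
  have hrj : r j = 1 := by
    have h1 : (r j : ℂ) = 1 := by
      rw [← hterm j, hfixξ j, hξj1]
    exact_mod_cast h1
  -- split the sum
  have hsplit : d = c j + ∑ i ∈ Finset.univ.erase j, c i * r i := by
    rw [keyR, ← Finset.add_sum_erase _ _ (Finset.mem_univ j), hrj, mul_one]
  by_contra hlt
  push_neg at hlt
  -- the rest-sum is ≤ 0 and ≥ 0, hence 0, hence each term is 0
  have hsum0 : ∑ i ∈ Finset.univ.erase j, c i * r i = 0 := by
    have hge : 0 ≤ ∑ i ∈ Finset.univ.erase j, c i * r i :=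
      Finset.sum_nonneg fun i _ => mul_nonneg (hcpos i).le (hrnn i)
    linarith
  have hterm0 : ∀ i ∈ Finset.univ.erase j, c i * r i = 0 :=
    (Finset.sum_eq_zero_iff_of_nonneg
      (fun i _ => mul_nonneg (hcpos i).le (hrnn i))).mp hsum0
  -- so P i *ᵥ ξ j = 0 for i ≠ j
  have hv0 : ∀ i, i ≠ j → P i *ᵥ ξ j = 0 := by
    intro i hij
    have hri : r i = 0 := by
      rcases mul_eq_zero.mp (hterm0 i (Finset.mem_erase.mpr ⟨hij, Finset.mem_univ i⟩)) with h | h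
      · exact absurd h (hcpos i).ne'
      · exact h
    funext k
    have h0 := (Finset.sum_eq_zero_iff_of_nonneg
      (fun k _ => Complex.normSq_nonneg ((P i *ᵥ ξ j) k))).mp hri.symm.symm k (Finset.mem_univ k)
    exact Complex.normSq_eq_zero.mp h0
  -- hence ⟨η i, ξ j⟩ = 0 for i ≠ j
  set a : ι → ℂ := fun i => star (η i) ⬝ᵥ ξ j with ha
  have ha0 : ∀ i, i ≠ j → a i = 0 := by
    intro i hij
    have h1 : a i = star (η i) ⬝ᵥ (P i *ᵥ ξ j) := by
      rw [ha]
      simp only []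
      conv_lhs => rw [← hfixη i]
      rw [Matrix.star_mulVec, (hP i).1.eq, ← Matrix.dotProduct_mulVec]
    rw [h1, hv0 i hij, dotProduct_zero]
  -- Parseval: ∑ i, conj (a i) * a i = 1
  set V : Matrix ι ι ℂ := Matrix.of fun i k => (starRingEnd ℂ) (η i k) with hV
  have hVV : V * Vᴴ = 1 := by
    ext i k
    simp only [hV, Matrix.mul_apply, Matrix.conjTranspose_apply, Matrix.of_apply,
      Matrix.one_apply, Complex.star_def, Complex.conj_conj]
    exact hη i k
  have hVV' : Vᴴ * V = 1 := mul_eq_one_comm.mp hVV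
  have haV : a = V *ᵥ ξ j := by
    funext i
    simp [ha, hV, Matrix.mulVec, dotProduct]
  have hpars : ∑ i, (starRingEnd ℂ) (a i) * a i = 1 := by
    have h1 : ∑ i, (starRingEnd ℂ) (a i) * a i = star a ⬝ᵥ a := by
      simp [dotProduct, Complex.star_def]
    rw [h1, haV, Matrix.star_mulVec, ← Matrix.dotProduct_mulVec,
      Matrix.mulVec_mulVec, hVV', Matrix.one_mulVec, hξj1]
  -- so |a j|² = 1
  have haj : (starRingEnd ℂ) (a j) * a j = 1 := by
    rw [← hpars, eq_comm]
    apply Finset.sum_eq_single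
    · intro i _ hij
      rw [ha0 i hij, mul_zero]
    · intro h
      exact absurd (Finset.mem_univ j) h
  have hnormaj : ‖a j‖ ^ 2 = 1 := by
    have h1 : (Complex.normSq (a j) : ℂ) = 1 := by
      rw [Complex.normSq_eq_conj_mul_self, haj]
    have h2 : Complex.normSq (a j) = 1 := by exact_mod_cast h1
    rw [Complex.sq_norm]
    exact h2
  -- the inner product in hc is conj (a j)
  have hinner : ∑ k, (starRingEnd ℂ) (ξ j k) * η j k = (starRingEnd ℂ) (a j) := by
    rw [ha]
    simp only [dotProduct, map_sum, _root_.map_mul, Pi.star_apply,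
      Complex.star_def, Complex.conj_conj]
    exact Finset.sum_congr rfl fun k _ => mul_comm _ _
  have hcj : c j = 0 := by
    have hnc : ‖(starRingEnd ℂ) (a j)‖ = ‖a j‖ := RCLike.norm_conj _
    rw [hc j, hinner, hnc, hnormaj]
    simp
  exact absurd hcj (hcpos j).ne'
end
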